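/- arXiv:1908.07002 — 2 statements merged into one kernel-verified Lean document; each statement's English description precedes it below -/
import Mathlib

section
/- (Injectivity and Jacobian of the foliation map.) Define Ψ : ℝ³ → ℝ³ by Ψ(t, s, v) = (t + s, t² + 2ts, t³ + 3t²s + v). Then Ψ is injective on ℝ × [0, ∞) × ℝ, and the absolute value of the Jacobian determinant of Ψ at (t,s,v) equals 2s. -/
noncomputable section

abbrev R3 : Type := ℝ × ℝ × ℝ

/-- The foliation map `Ψ(t,s,v) = (t + s, t² + 2ts, t³ + 3t²s + v)`. -/
def Ψmap (q : R3) : R3 :=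
  (q.1 + q.2.1, q.1 ^ 2 + 2 * q.1 * q.2.1, q.1 ^ 3 + 3 * q.1 ^ 2 * q.2.1 + q.2.2)

/-- The Jacobian matrix of `Ψ` at `q`: its columns are the images of the standard basis
vectors under the total derivative of `Ψ` at `q`. -/
def jacΨ (q : R3) : Matrix (Fin 3) (Fin 3) ℝ :=
  !![(fderiv ℝ Ψmap q ((1:ℝ),(0:ℝ),(0:ℝ))).1, (fderiv ℝ Ψmap q ((0:ℝ),(1:ℝ),(0:ℝ))).1,
       (fderiv ℝ Ψmap q ((0:ℝ),(0:ℝ),(1:ℝ))).1;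
     (fderiv ℝ Ψmap q ((1:ℝ),(0:ℝ),(0:ℝ))).2.1, (fderiv ℝ Ψmap q ((0:ℝ),(1:ℝ),(0:ℝ))).2.1,
       (fderiv ℝ Ψmap q ((0:ℝ),(0:ℝ),(1:ℝ))).2.1;
     (fderiv ℝ Ψmap q ((1:ℝ),(0:ℝ),(0:ℝ))).2.2, (fderiv ℝ Ψmap q ((0:ℝ),(1:ℝ),(0:ℝ))).2.2,
       (fderiv ℝ Ψmap q ((0:ℝ),(0:ℝ),(1:ℝ))).2.2]

def e1 : R3 →L[ℝ] ℝ := ContinuousLinearMap.fst ℝ ℝ (ℝ × ℝ)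
def e2 : R3 →L[ℝ] ℝ :=
  (ContinuousLinearMap.fst ℝ ℝ ℝ).comp (ContinuousLinearMap.snd ℝ ℝ (ℝ × ℝ))
def e3 : R3 →L[ℝ] ℝ :=
  (ContinuousLinearMap.snd ℝ ℝ ℝ).comp (ContinuousLinearMap.snd ℝ ℝ (ℝ × ℝ))

def Lmap (t s : ℝ) : R3 →L[ℝ] R3 :=
  (e1 + e2).prod ((((2*t+2*s) • e1) + (2*t) • e2).prod
    ((((3*t^2+6*t*s) • e1) + (3*t^2) • e2) + e3))

lemma hasfd (t s v : ℝ) : HasFDerivAt Ψmap (Lmap t s) ((t, s, v) : R3) := by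
  have h1 : HasFDerivAt (fun q : R3 => q.1) e1 (t, s, v) := hasFDerivAt_fst
  have h2 : HasFDerivAt (fun q : R3 => q.2.1) e2 (t, s, v) :=
    hasFDerivAt_fst.comp _ hasFDerivAt_snd
  have h3 : HasFDerivAt (fun q : R3 => q.2.2) e3 (t, s, v) :=
    hasFDerivAt_snd.comp _ hasFDerivAt_snd
  have H := HasFDerivAt.prodMk (h1.add h2)
    (HasFDerivAt.prodMk ((h1.mul h1).add ((h1.const_mul 2).mul h2))
      ((((h1.mul h1).mul h1).add (((h1.mul h1).const_mul 3).mul h2)).add h3))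
  have hfun : Ψmap = fun q : R3 =>
      (q.1 + q.2.1, (q.1 * q.1 + 2 * q.1 * q.2.1,
        q.1 * q.1 * q.1 + 3 * (q.1 * q.1) * q.2.1 + q.2.2)) := by
    funext q
    simp only [Ψmap, Prod.mk.injEq]
    exact ⟨trivial, by ring, by ring⟩
  rw [hfun]
  refine H.congr_fderiv ?_
  refine ContinuousLinearMap.ext fun u => ?_
  simp only [Lmap, e1, e2, e3, ContinuousLinearMap.prod_apply, ContinuousLinearMap.add_apply,
    ContinuousLinearMap.smul_apply, ContinuousLinearMap.coe_fst', ContinuousLinearMap.coe_snd',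
    ContinuousLinearMap.coe_comp', Function.comp_apply, smul_eq_mul, Prod.mk.injEq, Pi.mul_apply,
    nsmul_eq_mul]
  exact ⟨trivial, by ring, by ring⟩

lemma fderivΨ_eq (t s v : ℝ) : fderiv ℝ Ψmap ((t, s, v) : R3) = Lmap t s :=
  (hasfd t s v).fderiv

/-- **Injectivity and Jacobian of the foliation map**: `Ψ` is injective on
`ℝ × [0,∞) × ℝ`, and the absolute value of its Jacobian determinant at `(t,s,v)`
equals `2s` there. -/
theorem foliation_map_injective_and_jacobian :
    Set.InjOn Ψmap {q : R3 | 0 ≤ q.2.1} ∧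
    ∀ t s v : ℝ, 0 ≤ s → |(jacΨ (t, s, v)).det| = 2 * s := by
  constructor
  · rintro ⟨t, s, v⟩ hq ⟨t', s', v'⟩ hq' h
    simp only [Set.mem_setOf_eq] at hq hq'
    simp only [Ψmap, Prod.mk.injEq] at h
    obtain ⟨h1, h2, h3⟩ := h
    have h1sq : (t + s) ^ 2 = (t' + s') ^ 2 := by rw [h1]
    have hs2 : s ^ 2 = s' ^ 2 := by linear_combination h1sq - h2
    have hs : s = s' := by nlinarith [hs2, hq, hq']
    have ht : t = t' := by linarith
    subst hs; subst ht
    have hv : v = v' := by linarith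
    simp [hv]
  · intro t s v hs
    have h := fderivΨ_eq t s v
    have hdet : (jacΨ (t, s, v)).det = -(2 * s) := by
      simp only [jacΨ, h, Lmap, e1, e2, e3, ContinuousLinearMap.prod_apply,
        ContinuousLinearMap.add_apply, ContinuousLinearMap.smul_apply,
        ContinuousLinearMap.coe_fst', ContinuousLinearMap.coe_snd',
        ContinuousLinearMap.coe_comp', Function.comp_apply, smul_eq_mul,
        Matrix.det_fin_three, Matrix.of_apply, Matrix.cons_val', Matrix.cons_val_zero,
        Matrix.cons_val_one, Matrix.head_cons, Matrix.cons_val_two, Matrix.tail_cons, Matrix.empty_val',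
        Matrix.cons_val_fin_one, Matrix.head_fin_const]
      ring
    rw [hdet, abs_neg, abs_of_nonneg (by linarith)]
end
end

section
/- (Change of variables over the neighborhood of the moment surface.) Define Ψ : ℝ³ → ℝ³ by Ψ(t, s, v) = (t + s, t² + 2ts, t³ + 3t²s + v), and for δ > 0 let N_δ = Ψ(ℝ × [0,2] × [-δ, δ]). Then for every integrable function g : ℝ³ → ℂ, ∫_{N_δ} g(ξ) dξ = ∫_{-δ}^{δ} ∫_0^2 ∫_ℝ g(Ψ(t,s,v)) · 2s dt ds dv. -/
open MeasureTheory Set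

noncomputable section

def eR3 : R3 ≃ₗ[ℝ] (Fin 3 → ℝ) where
  toFun q := ![q.1, q.2.1, q.2.2]
  invFun x := (x 0, x 1, x 2)
  map_add' a b := by funext i; fin_cases i <;> simp
  map_smul' c a := by funext i; fin_cases i <;> simp
  left_inv a := by simp
  right_inv x := by funext i; fin_cases i <;> simp

def Mmat (t s : ℝ) : Matrix (Fin 3) (Fin 3) ℝ :=
  !![1, 1, 0; 2*t + 2*s, 2*t, 0; 3*t^2 + 6*t*s, 3*t^2, 1]

def Dmap (q : R3) : R3 →L[ℝ] R3 :=
  LinearMap.toContinuousLinearMap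
    ((eR3.symm.toLinearMap.comp (Matrix.toLin' (Mmat q.1 q.2.1))).comp eR3.toLinearMap)

lemma Dmap_apply (q u : R3) :
    Dmap q u = (u.1 + u.2.1,
      (2*q.1 + 2*q.2.1) * u.1 + 2*q.1 * u.2.1,
      (3*q.1^2 + 6*q.1*q.2.1) * u.1 + 3*q.1^2 * u.2.1 + u.2.2) := by
  refine Prod.ext ?_ (Prod.ext ?_ ?_) <;>
    simp [Dmap, Mmat, eR3, Matrix.toLin'_apply, Matrix.mulVec, dotProduct,
      Fin.sum_univ_three] <;> ring

lemma Dmap_det (q : R3) : (Dmap q).det = -2 * q.2.1 := by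
  have h1 : (Dmap q).det = LinearMap.det
      ((eR3.symm.toLinearMap.comp (Matrix.toLin' (Mmat q.1 q.2.1))).comp eR3.toLinearMap) := rfl
  have h2 : ((eR3.symm.toLinearMap.comp (Matrix.toLin' (Mmat q.1 q.2.1))).comp eR3.toLinearMap)
      = (eR3.symm : (Fin 3 → ℝ) →ₗ[ℝ] R3) ∘ₗ (Matrix.toLin' (Mmat q.1 q.2.1)) ∘ₗ
        ((eR3.symm.symm : R3 ≃ₗ[ℝ] (Fin 3 → ℝ)) : R3 →ₗ[ℝ] (Fin 3 → ℝ)) := by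
    rw [LinearEquiv.symm_symm, LinearMap.comp_assoc]
  rw [h1, h2, LinearMap.det_conj, LinearMap.det_toLin', Mmat, Matrix.det_fin_three]
  simp [Matrix.vecHead, Matrix.vecTail]

lemma hasFDeriv_Ψ (q : R3) : HasFDerivAt Ψmap (Dmap q) q := by
  have ht : HasFDerivAt (fun p : R3 => p.1) (ContinuousLinearMap.fst ℝ ℝ (ℝ × ℝ)) q :=
    hasFDerivAt_fst
  have hs : HasFDerivAt (fun p : R3 => p.2.1)
      ((ContinuousLinearMap.fst ℝ ℝ ℝ).comp (ContinuousLinearMap.snd ℝ ℝ (ℝ × ℝ))) q :=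
    hasFDerivAt_fst.comp q hasFDerivAt_snd
  have hv : HasFDerivAt (fun p : R3 => p.2.2)
      ((ContinuousLinearMap.snd ℝ ℝ ℝ).comp (ContinuousLinearMap.snd ℝ ℝ (ℝ × ℝ))) q :=
    hasFDerivAt_snd.comp q hasFDerivAt_snd
  have c1 := ht.add hs
  have e2 : (fun p : R3 => p.1 ^ 2 + 2 * p.1 * p.2.1)
      = fun p : R3 => p.1 * p.1 + (2 * p.1) * p.2.1 := by funext p; ring
  have c2 := e2.symm ▸ (show HasFDerivAt (fun p : R3 => p.1 * p.1 + (2 * p.1) * p.2.1) _ q from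
    (ht.mul ht).add ((ht.const_mul 2).mul hs))
  have e3 : (fun p : R3 => p.1 ^ 3 + 3 * p.1 ^ 2 * p.2.1 + p.2.2)
      = fun p : R3 => (p.1 * p.1 * p.1 + (3 * (p.1 * p.1)) * p.2.1) + p.2.2 := by
    funext p; ring
  have c3 := e3.symm ▸ (show HasFDerivAt
    (fun p : R3 => (p.1 * p.1 * p.1 + (3 * (p.1 * p.1)) * p.2.1) + p.2.2) _ q from
    (((ht.mul ht).mul ht).add (((ht.mul ht).const_mul 3).mul hs)).add hv)
  refine (c1.prodMk (c2.prodMk c3)).congr_fderiv ?_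
  refine ContinuousLinearMap.ext fun u => ?_
  rw [Dmap_apply]
  refine Prod.ext ?_ (Prod.ext ?_ ?_) <;> simp <;> ring

instance : (volume : Measure (ℝ × ℝ)).IsAddHaarMeasure :=
  Measure.prod.instIsAddHaarMeasure _ _

instance : (volume : Measure R3).IsAddHaarMeasure :=
  Measure.prod.instIsAddHaarMeasure _ _

lemma Ψ_injOn (δ : ℝ) :
    InjOn Ψmap (univ ×ˢ Icc (0:ℝ) 2 ×ˢ Icc (-δ) δ) := by
  rintro ⟨t, s, v⟩ ⟨-, hs, -⟩ ⟨t', s', v'⟩ ⟨-, hs', -⟩ h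
  simp only [Ψmap, Prod.mk.injEq] at h
  obtain ⟨h1, h2, h3⟩ := h
  simp only [mem_Icc] at hs hs'
  have h1sq : (t + s) ^ 2 = (t' + s') ^ 2 := by rw [h1]
  have hsq : s ^ 2 = s' ^ 2 := by nlinarith
  have hss : s = s' := by nlinarith [hs.1, hs'.1, sq_nonneg (s - s'), sq_nonneg (s + s')]
  have htt : t = t' := by linarith
  refine Prod.ext htt (Prod.ext hss ?_)
  subst hss htt
  simpa using h3

/-- **Change of variables over the neighborhood of the moment surface**: for
`N_δ = Ψ(ℝ × [0,2] × [-δ,δ])` and integrable `g : ℝ³ → ℂ`,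
`∫_{N_δ} g = ∫_{-δ}^δ ∫_0^2 ∫_ℝ g(Ψ(t,s,v)) · 2s dt ds dv`. -/
theorem change_of_variables_moment_neighborhood (δ : ℝ) (hδ : 0 < δ) (g : R3 → ℂ)
    (hg : Integrable g volume) :
    ∫ ξ in Ψmap '' (univ ×ˢ Icc (0:ℝ) 2 ×ˢ Icc (-δ) δ), g ξ =
      ∫ v in Icc (-δ) δ, ∫ s in Icc (0:ℝ) 2, ∫ t : ℝ, (2 * s) • g (Ψmap (t, s, v)) := by
  set S : Set R3 := univ ×ˢ Icc (0:ℝ) 2 ×ˢ Icc (-δ) δ with hS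
  have hSm : MeasurableSet S :=
    MeasurableSet.univ.prod (measurableSet_Icc.prod measurableSet_Icc)
  have hder : ∀ x ∈ S, HasFDerivAt Ψmap (Dmap x) x := fun x _ => hasFDeriv_Ψ x
  have hder' : ∀ x ∈ S, HasFDerivWithinAt Ψmap (Dmap x) S x :=
    fun x hx => (hasFDeriv_Ψ x).hasFDerivWithinAt
  have hinj := Ψ_injOn δ
  have habs : ∀ x ∈ S, |(Dmap x).det| • g (Ψmap x) = (2 * x.2.1) • g (Ψmap x) := by
    rintro ⟨t, s, v⟩ ⟨-, hs, -⟩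
    simp only [mem_Icc] at hs
    rw [Dmap_det]
    congr 1
    rw [abs_of_nonpos (by nlinarith [hs.1] : -2 * s ≤ 0)]
    ring
  have key := integral_image_eq_integral_abs_det_fderiv_smul volume hSm hder' hinj g
  rw [key]
  have hInt : IntegrableOn (fun x => |(Dmap x).det| • g (Ψmap x)) S volume := by
    rw [← integrableOn_image_iff_integrableOn_abs_det_fderiv_smul volume hSm hder' hinj g]
    exact hg.integrableOn
  have hInt2 : IntegrableOn (fun x : R3 => (2 * x.2.1) • g (Ψmap x)) S volume :=
    hInt.congr_fun habs hSm
  rw [setIntegral_congr_fun hSm habs]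
  set F : R3 → ℂ := fun x => (2 * x.2.1) • g (Ψmap x) with hF
  set νs : Measure ℝ := volume.restrict (Icc (0:ℝ) 2) with hνs
  set νv : Measure ℝ := volume.restrict (Icc (-δ) δ) with hνv
  have hrestrict : (volume : Measure R3).restrict S = (volume : Measure ℝ).prod (νs.prod νv) := by
    rw [hS, Measure.volume_eq_prod, ← Measure.prod_restrict, Measure.restrict_univ,
      Measure.volume_eq_prod, ← Measure.prod_restrict]
  have hFint : Integrable F ((volume : Measure ℝ).prod (νs.prod νv)) := by
    rw [← hrestrict]; exact hInt2
  have hGint : Integrable (fun p : ℝ × ℝ => ∫ t : ℝ, F (t, p)) (νs.prod νv) :=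
    hFint.swap.integral_prod_left
  calc ∫ x in S, F x = ∫ x, F x ∂((volume : Measure ℝ).prod (νs.prod νv)) := by
        rw [← hrestrict]
    _ = ∫ p, (∫ t : ℝ, F (t, p)) ∂(νs.prod νv) := integral_prod_symm F hFint
    _ = ∫ v, ∫ s, (∫ t : ℝ, F (t, s, v)) ∂νs ∂νv :=
        integral_prod_symm (fun p : ℝ × ℝ => ∫ t : ℝ, F (t, p)) hGint
    _ = ∫ v in Icc (-δ) δ, ∫ s in Icc (0:ℝ) 2, ∫ t : ℝ, (2 * s) • g (Ψmap (t, s, v)) := rfl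
end
end
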